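/- Let κ > 1 and let π be a probability measure on 𝒳×{−1,1} such that P(|2η(X)−1| ≤ t) ≤ c₁ t^{1/(κ−1)} for all t > 0, for some constant c₁ > 0. Then for every measurable function f:𝒳→[−1,1], A(f) − A* ≥ ((κ−1)/(2c₁κ))^{κ−1} κ^{−1} (E[|f(X)−f*(X)|])^{κ}. -/

import Mathlib

open MeasureTheory
open scoped ENNReal NNReal

noncomputable section

namespace AggClass

variable {X : Type*} [MeasurableSpace X]

/-- The sign function, with the convention `sgn 0 = 1`. -/
def sgn (t : ℝ) : ℝ := if 0 ≤ t then 1 else -1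

/-- The Bayes rule `f*(x) = sign (2 η x - 1)`. -/
def bayes (η : X → ℝ) : X → ℝ := fun x => sgn (2 * η x - 1)

/-- The hinge risk `A(f) = E[max (1 - Y f(X)) 0]`, as an extended nonnegative real. -/
def hingeRiskE (π : Measure (X × ℝ)) (f : X → ℝ) : ℝ≥0∞ :=
  ∫⁻ p, ENNReal.ofReal (max (1 - p.2 * f p.1) 0) ∂π

/-- The optimal hinge risk `A* = inf {A(f) : f : X → ℝ measurable}`. -/
def optHingeRiskE (π : Measure (X × ℝ)) : ℝ≥0∞ :=
  ⨅ (f : X → ℝ) (_ : Measurable f), hingeRiskE π f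

/-- The hinge risk, real-valued. -/
def hingeRisk (π : Measure (X × ℝ)) (f : X → ℝ) : ℝ := (hingeRiskE π f).toReal

/-- The optimal hinge risk, real-valued. -/
def optHingeRisk (π : Measure (X × ℝ)) : ℝ := (optHingeRiskE π).toReal

/-- The misclassification risk `R(f) = π (Y ≠ sign (f X))`, ℝ≥0∞-valued. -/
def misRiskE (π : Measure (X × ℝ)) (f : X → ℝ) : ℝ≥0∞ :=
  π {p : X × ℝ | p.2 ≠ sgn (f p.1)}

/-- The misclassification risk, real-valued. -/
def misRisk (π : Measure (X × ℝ)) (f : X → ℝ) : ℝ := (misRiskE π f).toReal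

/-- `π` is a joint law of a pair (X,Y) on `X × {-1,1}` with regression function
`η x = π(Y = 1 ∣ X = x)`. -/
structure IsClassif (π : Measure (X × ℝ)) (η : X → ℝ) : Prop where
  labels : π {p : X × ℝ | p.2 = 1 ∨ p.2 = -1}ᶜ = 0
  meas : Measurable η
  mem01 : ∀ x, η x ∈ Set.Icc (0 : ℝ) 1
  cond : ∀ B : Set X, MeasurableSet B →
    π (B ×ˢ ({1} : Set ℝ)) = ∫⁻ x in B, ENNReal.ofReal (η x) ∂(π.map Prod.fst)

/-- Margin assumption MA(κ) with constant c₀ : for every measurable prediction rule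
`f : X → {-1,1}`, `E[|f(X) - f*(X)|] ≤ c₀ (R(f) - R*)^(1/κ)`. -/
def MA (π : Measure (X × ℝ)) (η : X → ℝ) (κ c₀ : ℝ) : Prop :=
  ∀ f : X → ℝ, Measurable f → (∀ x, f x = 1 ∨ f x = -1) →
    ∫ x, |f x - bayes η x| ∂(π.map Prod.fst)
      ≤ c₀ * (misRisk π f - misRisk π (bayes η)) ^ (1 / κ)

/-- Margin assumption for the hinge risk MAH(κ) with constant c : for every measurable
`f : X → [-1,1]`, `E[|f(X) - f*(X)|] ≤ c (A(f) - A*)^(1/κ)`. -/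
def MAH (π : Measure (X × ℝ)) (η : X → ℝ) (κ c : ℝ) : Prop :=
  ∀ f : X → ℝ, Measurable f → (∀ x, f x ∈ Set.Icc (-1 : ℝ) 1) →
    ∫ x, |f x - bayes η x| ∂(π.map Prod.fst)
      ≤ c * (hingeRisk π f - optHingeRisk π) ^ (1 / κ)

/-- Convex combination of f₁,…,f_M with weights w. -/
def convComb {M : ℕ} (f : Fin M → X → ℝ) (w : Fin M → ℝ) : X → ℝ :=
  fun x => ∑ j, w j * f j x

/-- The set of hinge risks of the elements of the convex hull of f₁,…,f_M. -/
def convRiskSet (π : Measure (X × ℝ)) {M : ℕ} (f : Fin M → X → ℝ) : Set ℝ :=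
  {a | ∃ w : Fin M → ℝ, (∀ j, 0 ≤ w j) ∧ (∑ j, w j) = 1 ∧ a = hingeRisk π (convComb f w)}

/-- The law of an i.i.d. sample of size n from π. -/
def sample {α : Type*} [MeasurableSpace α] (π : Measure α) [SigmaFinite π] (n : ℕ) :
    Measure (Fin n → α) :=
  Measure.pi fun _ => π

/-- The empirical hinge risk on the sample D. -/
def empHinge {n : ℕ} (D : Fin n → X × ℝ) (f : X → ℝ) : ℝ :=
  (n : ℝ)⁻¹ * ∑ i, max (1 - (D i).2 * f (D i).1) 0

/-- The empirical misclassification risk on the sample D. -/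
def empMis {n : ℕ} (D : Fin n → X × ℝ) (f : X → ℝ) : ℝ :=
  (n : ℝ)⁻¹ * ∑ i, if (D i).2 ≠ f (D i).1 then (1 : ℝ) else 0

/-- The set of indices minimizing the empirical hinge risk. -/
def ermSet {n M : ℕ} (f : Fin M → X → ℝ) (D : Fin n → X × ℝ) : Finset (Fin M) :=
  Finset.univ.filter fun j => ∀ k, empHinge D (f j) ≤ empHinge D (f k)

/-- `tf` is an empirical risk minimization (ERM) aggregate for the hinge loss. -/
def IsERM {n M : ℕ} (f : Fin M → X → ℝ) (tf : (Fin n → X × ℝ) → X → ℝ) : Prop :=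
  ∀ D, ∃ j ∈ ermSet f D, tf D = f j

/-- `tf` is the averaged ERM (AERM) aggregate for the hinge loss. -/
def IsAERM {n M : ℕ} (f : Fin M → X → ℝ) (tf : (Fin n → X × ℝ) → X → ℝ) : Prop :=
  ∀ D, tf D = fun x => ((ermSet f D).card : ℝ)⁻¹ * ∑ j ∈ ermSet f D, f j x

/-- The exponential weights for the hinge loss. -/
def aewWeight {n M : ℕ} (f : Fin M → X → ℝ) (D : Fin n → X × ℝ) (j : Fin M) : ℝ :=
  Real.exp (-(n : ℝ) * empHinge D (f j)) / ∑ k, Real.exp (-(n : ℝ) * empHinge D (f k))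

/-- `tf` is the aggregation-with-exponential-weights (AEW) aggregate for the hinge loss. -/
def IsAEW {n M : ℕ} (f : Fin M → X → ℝ) (tf : (Fin n → X × ℝ) → X → ℝ) : Prop :=
  ∀ D, tf D = fun x => ∑ j, aewWeight f D j * f j x

/-- Empirical hinge risk on the first k observations of the sample D. -/
def empHingeK {n : ℕ} (D : Fin n → X × ℝ) (k : ℕ) (f : X → ℝ) : ℝ :=
  (k : ℝ)⁻¹ * ∑ i ∈ Finset.univ.filter (fun i : Fin n => (i : ℕ) < k),
    max (1 - (D i).2 * f (D i).1) 0

/-- The cumulative exponential weights for the hinge loss. -/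
def caewWeight {n M : ℕ} (f : Fin M → X → ℝ) (D : Fin n → X × ℝ) (j : Fin M) : ℝ :=
  (n : ℝ)⁻¹ * ∑ k ∈ Finset.Icc 1 n,
    Real.exp (-(k : ℝ) * empHingeK D k (f j)) /
      ∑ l, Real.exp (-(k : ℝ) * empHingeK D k (f l))

lemma measurable_sgn : Measurable sgn := by
  unfold sgn
  exact Measurable.ite (measurableSet_le measurable_const measurable_id)
    measurable_const measurable_const

lemma measurable_bayes {η : X → ℝ} (hη : Measurable η) : Measurable (bayes η) :=
  measurable_sgn.comp (((hη.const_mul 2).sub measurable_const))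

lemma sgn_mul_self (t : ℝ) : sgn t * t = |t| := by
  unfold sgn
  rcases le_or_gt 0 t with h | h
  · rw [if_pos h, abs_of_nonneg h, one_mul]
  · rw [if_neg (not_le.2 h), abs_of_neg h]; ring

lemma bayes_mem (η : X → ℝ) (x : X) : bayes η x ∈ Set.Icc (-1 : ℝ) 1 := by
  unfold bayes sgn; split <;> norm_num

lemma real_key (a g : ℝ) (ha0 : 0 ≤ a) (ha1 : a ≤ 1) :
    1 - |2 * a - 1| ≤ a * max (1 - g) 0 + (1 - a) * max (1 + g) 0 := by
  have h1 : 1 - g ≤ max (1 - g) 0 := le_max_left _ _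
  have h2 : (0:ℝ) ≤ max (1 - g) 0 := le_max_right _ _
  have h3 : 1 + g ≤ max (1 + g) 0 := le_max_left _ _
  have h4 : (0:ℝ) ≤ max (1 + g) 0 := le_max_right _ _
  rcases abs_cases (2 * a - 1) with ⟨he, hs⟩ | ⟨he, hs⟩ <;> rw [he]
  · nlinarith [mul_nonneg (by linarith : (0:ℝ) ≤ 2*a-1) h2,
      mul_nonneg (by linarith : (0:ℝ) ≤ 1 - a) (by linarith : (0:ℝ) ≤ max (1-g) 0 + max (1+g) 0 - 2)]
  · nlinarith [mul_nonneg (by linarith : (0:ℝ) ≤ 1 - 2*a) h4,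
      mul_nonneg ha0 (by linarith : (0:ℝ) ≤ max (1-g) 0 + max (1+g) 0 - 2)]

lemma excess_pointwise (a v : ℝ) (hv1 : -1 ≤ v) (hv2 : v ≤ 1) :
    (1 - v * (2*a - 1)) - (1 - |2*a - 1|) = |2*a - 1| * |v - sgn (2*a - 1)| := by
  unfold sgn
  rcases le_or_gt 0 (2*a - 1) with h | h
  · rw [if_pos h, abs_of_nonneg h, abs_of_nonpos (by linarith)]; ring
  · rw [if_neg (not_le.2 h), abs_of_neg h, abs_of_nonneg (by linarith)]; ring

section MeasurePart
variable (π : Measure (X × ℝ)) [IsProbabilityMeasure π] (η : X → ℝ)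

lemma restrict_decomp (hπ : IsClassif π η) :
    π = π.restrict {p : X × ℝ | p.2 = 1} + π.restrict {p : X × ℝ | p.2 = -1} := by
  have hm1 : MeasurableSet {p : X × ℝ | p.2 = 1} := measurable_snd (measurableSet_singleton 1)
  have hm2 : MeasurableSet {p : X × ℝ | p.2 = -1} :=
    measurable_snd (measurableSet_singleton (-1))
  have hd : Disjoint {p : X × ℝ | p.2 = 1} {p : X × ℝ | p.2 = -1} := by
    rw [Set.disjoint_left]
    rintro p h1 h2
    simp only [Set.mem_setOf_eq] at h1 h2
    rw [h1] at h2; norm_num at h2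
  rw [← Measure.restrict_union hd hm2]
  ext s hs
  symm
  rw [Measure.restrict_apply hs]
  have h0 : π (s \ ({p : X × ℝ | p.2 = 1} ∪ {p | p.2 = -1})) = 0 :=
    measure_mono_null (fun p hp => hp.2) hπ.labels
  conv_rhs => rw [← measure_inter_add_diff s (hm1.union hm2)]
  rw [h0, add_zero]

lemma prod_set_one (B : Set X) :
    Prod.fst ⁻¹' B ∩ {p : X × ℝ | p.2 = 1} = B ×ˢ ({1} : Set ℝ) := by
  ext p
  simp only [Set.mem_inter_iff, Set.mem_preimage, Set.mem_setOf_eq, Set.mem_prod,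
    Set.mem_singleton_iff]

lemma prod_set_negone (B : Set X) :
    Prod.fst ⁻¹' B ∩ {p : X × ℝ | p.2 = -1} = B ×ˢ ({-1} : Set ℝ) := by
  ext p
  simp only [Set.mem_inter_iff, Set.mem_preimage, Set.mem_setOf_eq, Set.mem_prod,
    Set.mem_singleton_iff]

lemma map_restrict_one (hπ : IsClassif π η) :
    (π.restrict {p : X × ℝ | p.2 = 1}).map Prod.fst
      = (π.map Prod.fst).withDensity fun x => ENNReal.ofReal (η x) := by
  ext B hB
  rw [Measure.map_apply measurable_fst hB, Measure.restrict_apply (measurable_fst hB),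
    withDensity_apply _ hB, prod_set_one, hπ.cond B hB]

lemma map_restrict_negone (hπ : IsClassif π η) :
    (π.restrict {p : X × ℝ | p.2 = -1}).map Prod.fst
      = (π.map Prod.fst).withDensity fun x => 1 - ENNReal.ofReal (η x) := by
  ext B hB
  rw [Measure.map_apply measurable_fst hB, Measure.restrict_apply (measurable_fst hB),
    withDensity_apply _ hB]
  have key : π (Prod.fst ⁻¹' B)
      = π (Prod.fst ⁻¹' B ∩ {p : X × ℝ | p.2 = 1})
        + π (Prod.fst ⁻¹' B ∩ {p : X × ℝ | p.2 = -1}) := by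
    conv_lhs => rw [restrict_decomp π η hπ]
    rw [Measure.add_apply, Measure.restrict_apply (measurable_fst hB),
      Measure.restrict_apply (measurable_fst hB)]
  rw [prod_set_one, hπ.cond B hB, ← Measure.map_apply measurable_fst hB] at key
  set μ := π.map Prod.fst
  have hsum : (∫⁻ x in B, ENNReal.ofReal (η x) ∂μ)
      + ∫⁻ x in B, (1 - ENNReal.ofReal (η x)) ∂μ = μ B := by
    rw [← lintegral_add_left hπ.meas.ennreal_ofReal]
    have hpt : ∀ x : X, ENNReal.ofReal (η x) + (1 - ENNReal.ofReal (η x)) = 1 := by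
      intro x
      have h1 : ENNReal.ofReal (η x) ≤ 1 := by
        rw [← ENNReal.ofReal_one]; exact ENNReal.ofReal_le_ofReal (hπ.mem01 x).2
      rw [add_tsub_cancel_of_le h1]
    simp only [hpt]
    rw [setLIntegral_one]
  have hfin : (∫⁻ x in B, ENNReal.ofReal (η x) ∂μ) ≠ ∞ := by
    refine ne_top_of_le_ne_top (measure_ne_top μ B) ?_
    rw [← hsum]; exact le_self_add
  rw [← hsum] at key
  exact ((ENNReal.add_right_inj hfin).mp key).symm

end MeasurePart

section Decomp
variable (π : Measure (X × ℝ)) [IsProbabilityMeasure π] (η : X → ℝ)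

lemma lintegral_decomp (hπ : IsClassif π η) (G : X × ℝ → ℝ≥0∞) (hG : Measurable G) :
    ∫⁻ p, G p ∂π
      = ∫⁻ x, (ENNReal.ofReal (η x) * G (x, 1)
          + (1 - ENNReal.ofReal (η x)) * G (x, -1)) ∂(π.map Prod.fst) := by
  have hG1 : Measurable fun x : X => G (x, 1) := hG.comp (measurable_id.prodMk measurable_const)
  have hG2 : Measurable fun x : X => G (x, -1) := hG.comp (measurable_id.prodMk measurable_const)
  conv_lhs => rw [restrict_decomp π η hπ]
  rw [lintegral_add_measure]
  have e1 : ∫⁻ p, G p ∂(π.restrict {p : X × ℝ | p.2 = 1})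
      = ∫⁻ x, ENNReal.ofReal (η x) * G (x, 1) ∂(π.map Prod.fst) := by
    have ecg : ∫⁻ p, G p ∂(π.restrict {p : X × ℝ | p.2 = 1})
        = ∫⁻ p, G (p.1, 1) ∂(π.restrict {p : X × ℝ | p.2 = 1}) := by
      apply lintegral_congr_ae
      filter_upwards [ae_restrict_mem (measurable_snd (measurableSet_singleton (1:ℝ)))] with p hp
      exact congrArg G (Prod.ext rfl hp)
    rw [ecg, ← lintegral_map hG1 measurable_fst, map_restrict_one π η hπ,
      lintegral_withDensity_eq_lintegral_mul _ hπ.meas.ennreal_ofReal hG1]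
    rfl
  have e2 : ∫⁻ p, G p ∂(π.restrict {p : X × ℝ | p.2 = -1})
      = ∫⁻ x, (1 - ENNReal.ofReal (η x)) * G (x, -1) ∂(π.map Prod.fst) := by
    have ecg : ∫⁻ p, G p ∂(π.restrict {p : X × ℝ | p.2 = -1})
        = ∫⁻ p, G (p.1, -1) ∂(π.restrict {p : X × ℝ | p.2 = -1}) := by
      apply lintegral_congr_ae
      filter_upwards [ae_restrict_mem (measurable_snd (measurableSet_singleton (-1:ℝ)))] with p hp
      exact congrArg G (Prod.ext rfl hp)
    rw [ecg, ← lintegral_map hG2 measurable_fst, map_restrict_negone π η hπ,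
      lintegral_withDensity_eq_lintegral_mul _
        (show Measurable fun x => 1 - ENNReal.ofReal (η x) from
          measurable_const.sub hπ.meas.ennreal_ofReal) hG2]
    rfl
  rw [e1, e2, ← lintegral_add_left (show Measurable fun x => ENNReal.ofReal (η x) * G (x, 1) from
    hπ.meas.ennreal_ofReal.mul hG1)]

lemma measurable_hinge_integrand {f : X → ℝ} (hf : Measurable f) :
    Measurable fun p : X × ℝ => ENNReal.ofReal (max (1 - p.2 * f p.1) 0) :=
  ((measurable_const.sub (measurable_snd.mul (hf.comp measurable_fst))).max
    measurable_const).ennreal_ofReal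

lemma hingeRiskE_eq (hπ : IsClassif π η) {f : X → ℝ} (hf : Measurable f)
    (hval : ∀ x, f x ∈ Set.Icc (-1 : ℝ) 1) :
    hingeRiskE π f = ∫⁻ x, ENNReal.ofReal (1 - f x * (2 * η x - 1)) ∂(π.map Prod.fst) := by
  rw [hingeRiskE, lintegral_decomp π η hπ _ (measurable_hinge_integrand hf)]
  refine lintegral_congr fun x => ?_
  have ha := hπ.mem01 x
  have hb := hval x
  have h01 : 1 - ENNReal.ofReal (η x) = ENNReal.ofReal (1 - η x) := by
    rw [ENNReal.ofReal_sub _ ha.1, ENNReal.ofReal_one]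
  dsimp only
  rw [max_eq_left (by linarith [hb.2] : (0:ℝ) ≤ 1 - 1 * f x),
    max_eq_left (by linarith [hb.1] : (0:ℝ) ≤ 1 - (-1) * f x),
    h01, ← ENNReal.ofReal_mul ha.1,
    ← ENNReal.ofReal_mul (by linarith [ha.2] : (0:ℝ) ≤ 1 - η x),
    ← ENNReal.ofReal_add (mul_nonneg ha.1 (by linarith [hb.2]))
      (mul_nonneg (by linarith [ha.2]) (by linarith [hb.1]))]
  congr 1
  ring

end Decomp

section RealPart
variable (π : Measure (X × ℝ)) [IsProbabilityMeasure π] (η : X → ℝ)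

lemma optHingeRiskE_eq (hπ : IsClassif π η) :
    optHingeRiskE π = ∫⁻ x, ENNReal.ofReal (1 - |2 * η x - 1|) ∂(π.map Prod.fst) := by
  apply le_antisymm
  · refine iInf_le_of_le (bayes η) (iInf_le_of_le (measurable_bayes hπ.meas) (le_of_eq ?_))
    rw [hingeRiskE_eq π η hπ (measurable_bayes hπ.meas) (bayes_mem η)]
    refine lintegral_congr fun x => ?_
    congr 2
    rw [bayes, sgn_mul_self]
  · refine le_iInf fun g => le_iInf fun hg => ?_
    rw [hingeRiskE, lintegral_decomp π η hπ _ (measurable_hinge_integrand hg)]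
    refine lintegral_mono fun x => ?_
    have ha := hπ.mem01 x
    dsimp only
    have h01 : 1 - ENNReal.ofReal (η x) = ENNReal.ofReal (1 - η x) := by
      rw [ENNReal.ofReal_sub _ ha.1, ENNReal.ofReal_one]
    rw [h01, ← ENNReal.ofReal_mul ha.1,
      ← ENNReal.ofReal_mul (by linarith [ha.2] : (0:ℝ) ≤ 1 - η x),
      ← ENNReal.ofReal_add (mul_nonneg ha.1 (le_max_right _ _))
        (mul_nonneg (by linarith [ha.2]) (le_max_right _ _))]
    apply ENNReal.ofReal_le_ofReal
    have hr := real_key (η x) (g x) ha.1 ha.2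
    have h1 : (1 : ℝ) - (-1) * g x = 1 + g x := by ring
    rw [h1, one_mul]
    exact hr

lemma integrable_of_bounded {g : X → ℝ} (μ : Measure X) [IsFiniteMeasure μ]
    (hg : Measurable g) (C : ℝ) (hC : ∀ x, |g x| ≤ C) : Integrable g μ :=
  (integrable_const C).mono' hg.aestronglyMeasurable
    (ae_of_all _ fun x => by rw [Real.norm_eq_abs]; exact hC x)

lemma hingeRisk_eq (hπ : IsClassif π η) {f : X → ℝ} (hf : Measurable f)
    (hval : ∀ x, f x ∈ Set.Icc (-1 : ℝ) 1) :
    hingeRisk π f = ∫ x, (1 - f x * (2 * η x - 1)) ∂(π.map Prod.fst) := by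
  rw [hingeRisk, hingeRiskE_eq π η hπ hf hval]
  refine (integral_eq_lintegral_of_nonneg_ae (ae_of_all _ fun x => ?_) ?_).symm
  · simp only [Pi.zero_apply]
    have ha := hπ.mem01 x
    have hb := hval x
    nlinarith [mul_nonneg (by linarith [hb.2] : (0:ℝ) ≤ 1 - f x)
        (by linarith [ha.1] : (0:ℝ) ≤ 2 * η x - 1 + 1),
      mul_nonneg (by linarith [hb.1] : (0:ℝ) ≤ 1 + f x)
        (by linarith [ha.2] : (0:ℝ) ≤ 1 - (2 * η x - 1))]
  · exact (measurable_const.sub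
      (hf.mul ((hπ.meas.const_mul 2).sub measurable_const))).aestronglyMeasurable

lemma optHingeRisk_eq (hπ : IsClassif π η) :
    optHingeRisk π = ∫ x, (1 - |2 * η x - 1|) ∂(π.map Prod.fst) := by
  rw [optHingeRisk, optHingeRiskE_eq π η hπ]
  refine (integral_eq_lintegral_of_nonneg_ae (ae_of_all _ fun x => ?_) ?_).symm
  · simp only [Pi.zero_apply]
    have ha := hπ.mem01 x
    have : |2 * η x - 1| ≤ 1 := abs_le.2 ⟨by linarith [ha.1], by linarith [ha.2]⟩
    linarith
  · exact (measurable_const.sub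
      ((hπ.meas.const_mul 2).sub measurable_const).abs).aestronglyMeasurable

lemma excess_eq (hπ : IsClassif π η) {f : X → ℝ} (hf : Measurable f)
    (hval : ∀ x, f x ∈ Set.Icc (-1 : ℝ) 1) :
    hingeRisk π f - optHingeRisk π
      = ∫ x, |2 * η x - 1| * |f x - bayes η x| ∂(π.map Prod.fst) := by
  have hμ : IsProbabilityMeasure (π.map Prod.fst) :=
    Measure.isProbabilityMeasure_map measurable_fst.aemeasurable
  have hm1 : Measurable fun x => (1 : ℝ) - f x * (2 * η x - 1) :=
    measurable_const.sub (hf.mul ((hπ.meas.const_mul 2).sub measurable_const))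
  have hm2 : Measurable fun x => (1 : ℝ) - |2 * η x - 1| :=
    measurable_const.sub ((hπ.meas.const_mul 2).sub measurable_const).abs
  have hb1 : ∀ x, |(1 : ℝ) - f x * (2 * η x - 1)| ≤ 2 := by
    intro x
    have ha := hπ.mem01 x
    have hb := hval x
    rw [abs_le]
    constructor <;>
      nlinarith [mul_nonneg (by linarith [hb.2] : (0:ℝ) ≤ 1 - f x)
          (by linarith [ha.1] : (0:ℝ) ≤ 2 * η x - 1 + 1),
        mul_nonneg (by linarith [hb.1] : (0:ℝ) ≤ 1 + f x)
          (by linarith [ha.2] : (0:ℝ) ≤ 1 - (2 * η x - 1)),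
        mul_nonneg (by linarith [hb.2] : (0:ℝ) ≤ 1 - f x)
          (by linarith [ha.2] : (0:ℝ) ≤ 1 - (2 * η x - 1)),
        mul_nonneg (by linarith [hb.1] : (0:ℝ) ≤ 1 + f x)
          (by linarith [ha.1] : (0:ℝ) ≤ 2 * η x - 1 + 1)]
  have hb2 : ∀ x, abs ((1 : ℝ) - |2 * η x - 1|) ≤ 2 := by
    intro x
    have ha := hπ.mem01 x
    have h1 : |2 * η x - 1| ≤ 1 := abs_le.2 ⟨by linarith [ha.1], by linarith [ha.2]⟩
    rw [abs_le]
    constructor <;> [linarith; linarith [abs_nonneg (2 * η x - 1)]]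
  rw [hingeRisk_eq π η hπ hf hval, optHingeRisk_eq π η hπ,
    ← integral_sub (integrable_of_bounded _ hm1 2 hb1) (integrable_of_bounded _ hm2 2 hb2)]
  refine integral_congr_ae (ae_of_all _ fun x => ?_)
  exact excess_pointwise (η x) (f x) (hval x).1 (hval x).2

end RealPart


/-- under the margin condition P(|2η(X)-1| ≤ t) ≤ c₁ t^{1/(κ-1)},
A(f) - A* ≥ ((κ-1)/(2c₁κ))^{κ-1} κ⁻¹ (E|f - f*|)^κ for all measurable f : X → [-1,1]. -/
theorem excess_hinge_lower_bound_of_margin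
    (π : Measure (X × ℝ)) [IsProbabilityMeasure π] (η : X → ℝ)
    (hπ : IsClassif π η) (κ c₁ : ℝ) (hκ : 1 < κ) (hc₁ : 0 < c₁)
    (hmargin : ∀ t : ℝ, 0 < t →
      ((π.map Prod.fst) {x | |2 * η x - 1| ≤ t}).toReal ≤ c₁ * t ^ (1 / (κ - 1)))
    (f : X → ℝ) (hf : Measurable f) (hval : ∀ x, f x ∈ Set.Icc (-1 : ℝ) 1) :
    ((κ - 1) / (2 * c₁ * κ)) ^ (κ - 1) * κ⁻¹ *
        (∫ x, |f x - bayes η x| ∂(π.map Prod.fst)) ^ κ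
      ≤ hingeRisk π f - optHingeRisk π := by
  have hμprob : IsProbabilityMeasure (π.map Prod.fst) :=
    Measure.isProbabilityMeasure_map measurable_fst.aemeasurable
  set μ := π.map Prod.fst with hμdef
  set g : X → ℝ := fun x => |f x - bayes η x| with hg
  have hgmeas : Measurable g := (hf.sub (measurable_bayes hπ.meas)).abs
  have hgb : ∀ x, g x ≤ 2 := by
    intro x
    have hb := hval x
    have hc := bayes_mem η x
    exact (abs_le.2 ⟨by linarith [hb.1, hc.2], by linarith [hb.2, hc.1]⟩ :
      |f x - bayes η x| ≤ 2)
  have hgnn : ∀ x, 0 ≤ g x := fun x => abs_nonneg _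
  have hgint : Integrable g μ := integrable_of_bounded μ hgmeas 2
    (fun x => by rw [abs_of_nonneg (hgnn x)]; exact hgb x)
  set h : X → ℝ := fun x => |2 * η x - 1| * g x with hh
  have hhmeas : Measurable h := ((hπ.meas.const_mul 2).sub measurable_const).abs.mul hgmeas
  have hhnn : ∀ x, 0 ≤ h x := fun x => mul_nonneg (abs_nonneg _) (hgnn x)
  have habs1 : ∀ x, |2 * η x - 1| ≤ 1 := fun x =>
    abs_le.2 ⟨by linarith [(hπ.mem01 x).1], by linarith [(hπ.mem01 x).2]⟩
  have hhint : Integrable h μ := integrable_of_bounded μ hhmeas 2 (fun x => by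
    rw [abs_of_nonneg (hhnn x)]
    calc h x ≤ 1 * g x := mul_le_mul_of_nonneg_right (habs1 x) (hgnn x)
    _ = g x := one_mul _
    _ ≤ 2 := hgb x)
  have hΔ : hingeRisk π f - optHingeRisk π = ∫ x, h x ∂μ := excess_eq π η hπ hf hval
  have hΔnn : 0 ≤ ∫ x, h x ∂μ := integral_nonneg hhnn
  set E := ∫ x, g x ∂μ with hE
  have hE0 : 0 ≤ E := integral_nonneg hgnn
  rw [hΔ]
  rcases eq_or_lt_of_le hE0 with heq | hEpos
  · rw [← heq, Real.zero_rpow (by linarith : κ ≠ 0), mul_zero]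
    exact hΔnn
  · set t := ((κ - 1) / (2 * c₁ * κ) * E) ^ (κ - 1) with ht
    have hbase : 0 < (κ - 1) / (2 * c₁ * κ) * E :=
      mul_pos (div_pos (by linarith) (by positivity)) hEpos
    have ht0 : 0 < t := Real.rpow_pos_of_pos hbase _
    have htpow : t ^ (1 / (κ - 1)) = (κ - 1) / (2 * c₁ * κ) * E := by
      rw [ht, ← Real.rpow_mul hbase.le, mul_one_div, div_self (by linarith : κ - 1 ≠ 0),
        Real.rpow_one]
    set S := {x | |2 * η x - 1| ≤ t} with hSdef
    have hSm : MeasurableSet S :=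
      measurableSet_le ((hπ.meas.const_mul 2).sub measurable_const).abs measurable_const
    have hsplit : E = (∫ x in S, g x ∂μ) + ∫ x in Sᶜ, g x ∂μ :=
      (integral_add_compl hSm hgint).symm
    have hpart1 : ∫ x in S, g x ∂μ ≤ 2 * (c₁ * t ^ (1 / (κ - 1))) := by
      have h1 : ∫ x in S, g x ∂μ ≤ ∫ x in S, (2:ℝ) ∂μ :=
        setIntegral_mono_on hgint.integrableOn (integrable_const 2).integrableOn hSm
          (fun x _ => hgb x)
      have h2 : ∫ _x in S, (2:ℝ) ∂μ = (μ S).toReal * 2 := by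
        rw [setIntegral_const, smul_eq_mul]; rfl
      have h3 := hmargin t ht0
      calc ∫ x in S, g x ∂μ ≤ (μ S).toReal * 2 := h1.trans h2.le
        _ ≤ (c₁ * t ^ (1 / (κ - 1))) * 2 :=
          mul_le_mul_of_nonneg_right h3 (by norm_num)
        _ = 2 * (c₁ * t ^ (1 / (κ - 1))) := by ring
    have hpart2 : ∫ x in Sᶜ, g x ∂μ ≤ t⁻¹ * ∫ x, h x ∂μ := by
      have h1 : ∫ x in Sᶜ, g x ∂μ ≤ ∫ x in Sᶜ, t⁻¹ * h x ∂μ := by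
        refine setIntegral_mono_on hgint.integrableOn (hhint.const_mul t⁻¹).integrableOn
          hSm.compl (fun x hx => ?_)
        have hx' : t < |2 * η x - 1| := not_le.1 hx
        have hm : t * g x ≤ |2 * η x - 1| * g x :=
          mul_le_mul_of_nonneg_right hx'.le (hgnn x)
        calc g x = t⁻¹ * (t * g x) := by
              field_simp
          _ ≤ t⁻¹ * (|2 * η x - 1| * g x) :=
              mul_le_mul_of_nonneg_left hm (inv_nonneg.2 ht0.le)
      have h2 : ∫ x in Sᶜ, t⁻¹ * h x ∂μ = t⁻¹ * ∫ x in Sᶜ, h x ∂μ := integral_const_mul _ _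
      have h3 : ∫ x in Sᶜ, h x ∂μ ≤ ∫ x, h x ∂μ :=
        setIntegral_le_integral hhint (ae_of_all _ hhnn)
      calc ∫ x in Sᶜ, g x ∂μ ≤ t⁻¹ * ∫ x in Sᶜ, h x ∂μ := h1.trans h2.le
        _ ≤ t⁻¹ * ∫ x, h x ∂μ := mul_le_mul_of_nonneg_left h3 (inv_nonneg.2 ht0.le)
    have hEineq : E ≤ (κ - 1) / κ * E + t⁻¹ * ∫ x, h x ∂μ := by
      have he : 2 * (c₁ * t ^ (1 / (κ - 1))) = (κ - 1) / κ * E := by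
        rw [htpow]
        field_simp
      calc E = (∫ x in S, g x ∂μ) + ∫ x in Sᶜ, g x ∂μ := hsplit
        _ ≤ 2 * (c₁ * t ^ (1 / (κ - 1))) + t⁻¹ * ∫ x, h x ∂μ := add_le_add hpart1 hpart2
        _ = (κ - 1) / κ * E + t⁻¹ * ∫ x, h x ∂μ := by rw [he]
    have hκ0 : (0:ℝ) < κ := by linarith
    have hstep : E / κ ≤ t⁻¹ * ∫ x, h x ∂μ := by
      have heq2 : E - (κ - 1) / κ * E = E / κ := by field_simp; ring
      linarith [hEineq]
    have hfinal : t * (E / κ) ≤ ∫ x, h x ∂μ := by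
      have hmm := mul_le_mul_of_nonneg_left hstep ht0.le
      rwa [← mul_assoc, mul_inv_cancel₀ (ne_of_gt ht0), one_mul] at hmm
    refine le_trans (le_of_eq ?_) hfinal
    rw [ht, Real.mul_rpow (div_nonneg (by linarith) (by positivity) : (0:ℝ) ≤ (κ - 1) / (2 * c₁ * κ)) hEpos.le]
    have hEκ : E ^ κ = E ^ (κ - 1) * E := by
      conv_lhs => rw [show κ = (κ - 1) + 1 by ring]
      rw [Real.rpow_add hEpos, Real.rpow_one]
    rw [hEκ]
    ring


end AggClass
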